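/- In any connected cycle-tree, at most one cut-vertex is a cycle-vertex; moreover, if some cycle-vertex is a cut-vertex, then the graph is a partial 2-tree (treewidth at most 2). -/

import Mathlib

open SimpleGraph Set

/-- A planar straight-line drawing of a graph: vertices go to distinct points of
the plane, edges are straight-line segments, and two segments of distinct edges
meet only at images of common endpoints. -/
structure PlanarSLDrawing {V : Type} (G : SimpleGraph V) where
  pos : V → ℝ × ℝ
  inj : Function.Injective pos
  planar : ∀ ⦃u v x y : V⦄, G.Adj u v → G.Adj x y →
    ∀ p : ℝ × ℝ, p ∈ segment ℝ (pos u) (pos v) → p ∈ segment ℝ (pos x) (pos y) →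
      ({u, v} : Set V) = {x, y} ∨
        ((p = pos u ∨ p = pos v) ∧ (p = pos x ∨ p = pos y))

/-- Two plane vectors are parallel (determine the same slope). -/
def Parallel (p q : ℝ × ℝ) : Prop := p.1 * q.2 = p.2 * q.1

/-- The drawing uses at most `k` distinct slopes: there is a set of at most `k`
nonzero direction vectors such that every edge is parallel to one of them. -/
def UsesAtMostSlopes {V : Type} {G : SimpleGraph V} (d : PlanarSLDrawing G) (k : ℕ) : Prop :=
  ∃ D : Finset (ℝ × ℝ), D.card ≤ k ∧ (∀ s ∈ D, s ≠ 0) ∧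
    ∀ ⦃u v : V⦄, G.Adj u v → ∃ s ∈ D, Parallel (d.pos v - d.pos u) s

/-- A tree decomposition of a graph `G`. -/
structure TreeDecomp {V : Type} (G : SimpleGraph V) where
  ι : Type
  tree : SimpleGraph ι
  isTree : tree.IsTree
  bag : ι → Set V
  covers_vert : ∀ v : V, ∃ i, v ∈ bag i
  covers_edge : ∀ ⦃u v : V⦄, G.Adj u v → ∃ i, u ∈ bag i ∧ v ∈ bag i
  bag_connected : ∀ v : V, (tree.induce {i | v ∈ bag i}).Connected

/-- `G` has treewidth at most `k`: it admits a tree decomposition all of whose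
bags are finite of size at most `k + 1`. -/
def HasTreewidthAtMost {V : Type} (G : SimpleGraph V) (k : ℕ) : Prop :=
  ∃ d : TreeDecomp G, ∀ i, (d.bag i).Finite ∧ (d.bag i).ncard ≤ k + 1

/-- The union of all drawn edge segments. -/
def drawnEdges {V : Type} {G : SimpleGraph V} (d : PlanarSLDrawing G) : Set (ℝ × ℝ) :=
  ⋃ (u : V) (v : V) (_ : G.Adj u v), segment ℝ (d.pos u) (d.pos v)

/-- A vertex lies on the outer face of the drawing: its image is in the closure of the
unbounded region of the complement of the drawing. -/
def OnOuterFace {V : Type} {G : SimpleGraph V} (d : PlanarSLDrawing G) (x : V) : Prop :=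
  d.pos x ∈ closure {p : ℝ × ℝ | p ∉ drawnEdges d ∧
    ¬ Bornology.IsBounded (connectedComponentIn (drawnEdges d)ᶜ p)}

/-- A graph is a (chordless, when induced) cycle: connected, at least three vertices,
and every vertex has exactly two neighbours. -/
def IsCycleGraph {W : Type} (H : SimpleGraph W) : Prop :=
  H.Connected ∧ 3 ≤ (Set.univ : Set W).ncard ∧ ∀ w : W, (H.neighborSet w).ncard = 2

/-- A cycle-tree: a planar straight-line drawing in which the vertices on the outer
face are exactly `cycleVerts`, these induce a chordless cycle, and the internal
vertices induce a tree. -/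
structure CycleTreeStruct {V : Type} [Fintype V] (G : SimpleGraph V) where
  drawing : PlanarSLDrawing G
  cycleVerts : Set V
  outer_iff : ∀ x : V, x ∈ cycleVerts ↔ OnOuterFace drawing x
  cycle_cycle : IsCycleGraph (G.induce cycleVerts)
  tree_tree : (G.induce (cycleVertsᶜ)).IsTree

/-- `v` is a cut-vertex of `G`: removing it disconnects the graph. -/
def IsCutVertex {V : Type} (G : SimpleGraph V) (v : V) : Prop :=
  ¬ (G.induce (({v} : Set V)ᶜ)).Preconnected

namespace CTAux

variable {W : Type} -- VARDONE

lemma mem_support_append {G : SimpleGraph W} {u v x w : W} {p : G.Walk u v} {q : G.Walk v x}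
    (hp : w ∉ p.support) (hq : w ∉ q.support) : w ∉ (p.append q).support := by
  rw [Walk.mem_support_append_iff]
  tauto

lemma mem_support_reverse {G : SimpleGraph W} {u v w : W} {p : G.Walk u v}
    (hp : w ∉ p.support) : w ∉ p.reverse.support := by
  rwa [Walk.support_reverse, List.mem_reverse]

lemma avoid_walk_trunc {G : SimpleGraph W} {w : W} :
    ∀ {u v : W} (_ : G.Walk u v), u ≠ w →
      (v ≠ w ∧ ∃ q : G.Walk u v, w ∉ q.support) ∨
      (∃ y, y ≠ w ∧ G.Adj y w ∧ ∃ q : G.Walk u y, w ∉ q.support) := by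
  intro u v p
  induction p with
  | nil =>
    intro hu
    exact Or.inl ⟨hu, Walk.nil, by simpa using (Ne.symm hu)⟩
  | @cons u x v h p ih =>
    intro hu
    by_cases hx : x = w
    · exact Or.inr ⟨u, hu, hx ▸ h, Walk.nil, by simpa using (Ne.symm hu)⟩
    · rcases ih hx with ⟨hv, q, hq⟩ | ⟨y, hy, hadj, q, hq⟩
      · exact Or.inl ⟨hv, Walk.cons h q, by
          simp only [Walk.support_cons, List.mem_cons, not_or]
          exact ⟨Ne.symm hu, hq⟩⟩
      · exact Or.inr ⟨y, hy, hadj, Walk.cons h q, by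
          simp only [Walk.support_cons, List.mem_cons, not_or]
          exact ⟨Ne.symm hu, hq⟩⟩

lemma parity_core [Fintype W] (H : SimpleGraph W)
    (h2 : ∀ w, (H.neighborSet w).ncard = 2) {w a b : W}
    (hnbr : H.neighborSet w = {a, b}) (hab : a ≠ b)
    (hno : ¬ ∃ q : H.Walk a b, w ∉ q.support) : False := by
  classical
  have hwa : H.Adj w a := by
    have : a ∈ H.neighborSet w := by rw [hnbr]; exact Set.mem_insert _ _
    exact this
  have hwb : H.Adj w b := by
    have : b ∈ H.neighborSet w := by rw [hnbr]; exact Set.mem_insert_of_mem _ rfl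
    exact this
  set S : Set W := {x | ∃ q : H.Walk a x, w ∉ q.support} with hS
  have haS : a ∈ S := ⟨Walk.nil, by simpa using (H.ne_of_adj hwa)⟩
  have hbS : b ∉ S := fun h => hno h
  have hSne : ∀ x ∈ S, x ≠ w := by
    rintro x ⟨q, hq⟩ rfl
    exact hq (Walk.end_mem_support q)
  have hclose : ∀ x ∈ S, ∀ y, H.Adj x y → y ≠ w → y ∈ S := by
    rintro x ⟨q, hq⟩ y hadj hy
    refine ⟨q.concat hadj, ?_⟩
    rw [Walk.support_concat]
    simp only [List.concat_eq_append, List.mem_append, List.mem_singleton, not_or]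
    exact ⟨hq, Ne.symm hy⟩
  haveI : Fintype ↥S := (Set.toFinite S).fintype
  set H₀ : SimpleGraph ↥S := H.induce S with hH₀
  haveI : DecidableRel H₀.Adj := Classical.decRel _
  have himg : ∀ x : ↥S, Subtype.val '' (H₀.neighborSet x) = H.neighborSet x.val \ {w} := by
    intro x
    ext y
    constructor
    · rintro ⟨⟨y', hy'⟩, hadj, rfl⟩
      exact ⟨hadj, hSne y' hy'⟩
    · rintro ⟨hadj, hyw⟩
      exact ⟨⟨y, hclose x.val x.2 y hadj hyw⟩, hadj, rfl⟩
  have hdeg : ∀ x : ↥S, H₀.degree x = if x = (⟨a, haS⟩ : ↥S) then 1 else 2 := by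
    intro x
    have h1 : H₀.degree x = (H₀.neighborSet x).ncard := by
      rw [← SimpleGraph.card_neighborSet_eq_degree, Set.ncard_eq_toFinset_card']
      simp [Set.toFinset_card]
    have h2' : (H₀.neighborSet x).ncard = (H.neighborSet x.val \ {w}).ncard := by
      rw [← himg x, Set.ncard_image_of_injective _ Subtype.val_injective]
    by_cases hxa : x = (⟨a, haS⟩ : ↥S)
    · have hw : w ∈ H.neighborSet x.val := by
        subst hxa; exact hwa.symm
      rw [h1, h2', if_pos hxa, Set.ncard_diff_singleton_of_mem hw, h2 x.val]
    · have hw : w ∉ H.neighborSet x.val := by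
        intro hmem
        have : x.val ∈ H.neighborSet w := (SimpleGraph.mem_neighborSet _ _ _).2
          ((SimpleGraph.mem_neighborSet _ _ _).1 hmem).symm
        rw [hnbr] at this
        rcases this with h | h
        · exact hxa (Subtype.ext h)
        · exact hbS (h ▸ x.2)
      rw [h1, h2', if_neg hxa, Set.diff_singleton_eq_self hw, h2 x.val]
  have hsum := H₀.sum_degrees_eq_twice_card_edges
  rw [Finset.sum_congr rfl (fun x _ => hdeg x)] at hsum
  have hcard : 1 ≤ Fintype.card ↥S := Fintype.card_pos_iff.mpr ⟨⟨a, haS⟩⟩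
  have heval : ∑ x : ↥S, (if x = (⟨a, haS⟩ : ↥S) then 1 else 2) =
      2 * (Fintype.card ↥S - 1) + 1 := by
    rw [← Finset.sum_erase_add _ _ (Finset.mem_univ (⟨a, haS⟩ : ↥S))]
    rw [if_pos rfl]
    congr 1
    rw [Finset.sum_congr rfl (fun x hx => if_neg (Finset.ne_of_mem_erase hx))]
    rw [Finset.sum_const, Finset.card_erase_of_mem (Finset.mem_univ _), smul_eq_mul,
      Finset.card_univ, mul_comm]
  rw [heval] at hsum
  omega

lemma del_connected [Fintype W] {H : SimpleGraph W}
    (hc : H.Preconnected) (h2 : ∀ w, (H.neighborSet w).ncard = 2) (w : W) {x y : W}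
    (hx : x ≠ w) (hy : y ≠ w) : ∃ p : H.Walk x y, w ∉ p.support := by
  classical
  obtain ⟨a, b, hab, hnbr⟩ := Set.ncard_eq_two.mp (h2 w)
  have hwa : H.Adj w a := by
    have : a ∈ H.neighborSet w := by rw [hnbr]; exact Set.mem_insert _ _
    exact this
  have key : ∀ z, z ≠ w → (∃ q : H.Walk z a, w ∉ q.support) ∨ (∃ q : H.Walk z b, w ∉ q.support) := by
    intro z hz
    obtain ⟨p⟩ := hc z a
    rcases avoid_walk_trunc p hz with ⟨_, q, hq⟩ | ⟨y', hy', hadj, q, hq⟩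
    · exact Or.inl ⟨q, hq⟩
    · have : y' ∈ H.neighborSet w := hadj.symm
      rw [hnbr] at this
      rcases this with rfl | rfl
      · exact Or.inl ⟨q, hq⟩
      · exact Or.inr ⟨q, hq⟩
  have hab_conn : ∃ q : H.Walk a b, w ∉ q.support := by
    by_contra hno
    exact parity_core H h2 hnbr hab hno
  obtain ⟨qab, hqab⟩ := hab_conn
  rcases key x hx with ⟨qx, hqx⟩ | ⟨qx, hqx⟩ <;> rcases key y hy with ⟨qy, hqy⟩ | ⟨qy, hqy⟩
  · exact ⟨qx.append qy.reverse, mem_support_append hqx (mem_support_reverse hqy)⟩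
  · exact ⟨qx.append (qab.append qy.reverse),
      mem_support_append hqx (mem_support_append hqab (mem_support_reverse hqy))⟩
  · exact ⟨qx.append (qab.reverse.append qy.reverse),
      mem_support_append hqx (mem_support_append (mem_support_reverse hqab)
        (mem_support_reverse hqy))⟩
  · exact ⟨qx.append qy.reverse, mem_support_append hqx (mem_support_reverse hqy)⟩




/-- In a cycle walk, every support vertex has two distinct incident edges of the walk. -/
lemma cycle_two_edges {G : SimpleGraph W} {x : W} {q : G.Walk x x} (hq : q.IsCycle)
    {y : W} (hy : y ∈ q.support) :
    ∃ z1 z2, z1 ≠ z2 ∧ s(y, z1) ∈ q.edges ∧ s(y, z2) ∈ q.edges := by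
  classical
  have hr : (q.rotate y hy).IsCycle := hq.rotate hy
  have hsub : (q.rotate y hy).toSubgraph = q.toSubgraph := q.toSubgraph_rotate hy
  have hmem : ∀ e, e ∈ (q.rotate y hy).edges → e ∈ q.edges := by
    intro e he
    rw [← Walk.mem_edges_toSubgraph, ← hsub, Walk.mem_edges_toSubgraph]
    exact he
  set r := q.rotate y hy with hrdef
  clear_value r
  match r, hr, hmem with
  | Walk.nil, hr, _ => exact absurd hr (Walk.IsCycle.not_of_nil)
  | Walk.cons (v := z) h p, hr, hmem =>
    have hcyc := (Walk.cons_isCycle_iff p h).mp hr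
    have hlen : 2 ≤ p.length := by
      have := hr.three_le_length
      simpa using this
    -- p : Walk z y ; p.reverse : Walk y z, not nil
    have hpnotnil : ¬ p.reverse.Nil := by
      rw [Walk.nil_iff_length_eq]
      rw [Walk.length_reverse]
      omega
    obtain ⟨z', hadj', p₂, hp₂⟩ := Walk.not_nil_iff.mp hpnotnil
    have he2 : s(y, z') ∈ p.edges := by
      have : s(y, z') ∈ p.reverse.edges := by
        rw [hp₂]
        simp
      rwa [Walk.edges_reverse, List.mem_reverse] at this
    have hzz : z ≠ z' := by
      rintro rfl
      exact hcyc.2 he2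
    refine ⟨z, z', hzz, ?_, ?_⟩
    · exact hmem _ (by simp)
    · exact hmem _ (by rw [Walk.edges_cons]; exact List.mem_cons_of_mem _ he2)

/-- In a 2-regular graph, the support of a cycle is closed under adjacency. -/
lemma cycle_support_closed {G : SimpleGraph W} [Fintype W]
    (h2 : ∀ w, (G.neighborSet w).ncard = 2) {x : W} {q : G.Walk x x} (hq : q.IsCycle)
    {y z : W} (hy : y ∈ q.support) (hadj : G.Adj y z) : z ∈ q.support := by
  obtain ⟨z1, z2, hne, he1, he2⟩ := cycle_two_edges hq hy
  have h1 : z1 ∈ G.neighborSet y := (Walk.adj_of_mem_edges q he1)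
  have h2' : z2 ∈ G.neighborSet y := (Walk.adj_of_mem_edges q he2)
  have hset : ({z1, z2} : Set W) ⊆ G.neighborSet y := by
    rintro t (rfl | rfl)
    · exact h1
    · exact h2'
  have heq : G.neighborSet y = {z1, z2} := by
    apply Set.eq_of_subset_of_ncard_le ?_ ?_ (Set.toFinite _) |>.symm
    · exact hset
    · rw [h2 y, Set.ncard_pair hne]
  have : z ∈ ({z1, z2} : Set W) := heq ▸ hadj
  rcases this with rfl | rfl
  · exact q.snd_mem_support_of_mem_edges he1
  · exact q.snd_mem_support_of_mem_edges he2

/-- In a connected 2-regular graph, every cycle passes through every vertex. -/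
lemma cycle_support_all {G : SimpleGraph W} [Fintype W]
    (hc : G.Preconnected) (h2 : ∀ w, (G.neighborSet w).ncard = 2) {x : W} {q : G.Walk x x}
    (hq : q.IsCycle) (z : W) : z ∈ q.support := by
  obtain ⟨p⟩ := hc x z
  have main : ∀ {u v : W} (p : G.Walk u v), u ∈ q.support → v ∈ q.support := by
    intro u v p
    induction p with
    | nil => exact id
    | @cons u' v' w' h p ih =>
      intro hu
      exact ih (cycle_support_closed h2 hq hu h)
  exact main p q.start_mem_support




lemma tree_parent {H : SimpleGraph W} (hH : H.IsTree) (r : W) :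
    ∃ (p : W → W) (dep : W → ℕ), p r = r ∧
      (∀ v, v ≠ r → H.Adj v (p v) ∧ dep (p v) < dep v) ∧
      (∀ u v, H.Adj u v → p u = v ∨ p v = u) := by
  classical
  have hup := hH.existsUnique_path
  set P : ∀ v : W, H.Walk v r := fun v => (hup v r).choose with hPdef
  have hPpath : ∀ v, (P v).IsPath := fun v => (hup v r).choose_spec.1
  have hPuniq : ∀ (v : W) (q : H.Walk v r), q.IsPath → q = P v :=
    fun v q hq => (hup v r).choose_spec.2 q hq
  have hlen : ∀ v, v ≠ r → 0 < (P v).length := by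
    intro v hv
    rcases Nat.eq_zero_or_pos (P v).length with h | h
    · exact absurd (Walk.eq_of_length_eq_zero h) hv
    · exact h
  refine ⟨fun v => (P v).getVert 1, fun v => (P v).length, ?_, ?_, ?_⟩
  · show (P r).getVert 1 = r
    have : (Walk.nil : H.Walk r r) = P r := hPuniq r Walk.nil (by simp)
    rw [← this]
    rfl
  · intro v hv
    constructor
    · show H.Adj v ((P v).getVert 1)
      have := (P v).adj_getVert_succ (i := 0) (hlen v hv)
      rwa [Walk.getVert_zero] at this
    · show (P ((P v).getVert 1)).length < (P v).length
      have hnotnil : ¬ (P v).Nil := by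
        rw [Walk.not_nil_iff_lt_length]
        exact hlen v hv
      have htail : (P v).tail = P ((P v).getVert 1) :=
        hPuniq _ ((P v).tail) ((hPpath v).tail)
      have hlt := Walk.length_tail_add_one hnotnil
      rw [htail] at hlt
      omega
  · intro u v hadj
    have huv : u ≠ v := H.ne_of_adj hadj
    have hnot : ¬ (u ∈ (P v).support ∧ v ∈ (P u).support) := by
      rintro ⟨hu, hv⟩
      have h1 : (P v).dropUntil u hu = P u := hPuniq u _ ((hPpath v).dropUntil hu)
      have h2 : (P u).dropUntil v hv = P v := hPuniq v _ ((hPpath u).dropUntil hv)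
      have hs1 := (P v).take_spec hu
      have hs2 := (P u).take_spec hv
      have hl1 : ((P v).takeUntil u hu).length + ((P v).dropUntil u hu).length
          = (P v).length := by
        rw [← Walk.length_append, hs1]
      have hl2 : ((P u).takeUntil v hv).length + ((P u).dropUntil v hv).length
          = (P u).length := by
        rw [← Walk.length_append, hs2]
      have ht1 : 0 < ((P v).takeUntil u hu).length := by
        rcases Nat.eq_zero_or_pos ((P v).takeUntil u hu).length with h | h
        · exact absurd (Walk.eq_of_length_eq_zero h) (Ne.symm huv)
        · exact h
      have ht2 : 0 < ((P u).takeUntil v hv).length := by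
        rcases Nat.eq_zero_or_pos ((P u).takeUntil v hv).length with h | h
        · exact absurd (Walk.eq_of_length_eq_zero h) huv
        · exact h
      rw [h1] at hl1
      rw [h2] at hl2
      omega
    by_cases hu : u ∈ (P v).support
    · have hv : v ∉ (P u).support := fun hv => hnot ⟨hu, hv⟩
      right
      show (P v).getVert 1 = u
      have : Walk.cons hadj.symm (P u) = P v := hPuniq v _ ((hPpath u).cons hv)
      rw [← this]
      simp [Walk.getVert_cons_succ]
    · left
      show (P u).getVert 1 = v
      have : Walk.cons hadj (P v) = P u := hPuniq u _ ((hPpath v).cons hu)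
      rw [← this]
      simp [Walk.getVert_cons_succ]




/-- The graph determined by a parent function. -/
def parGraph (par : W → W) : SimpleGraph W where
  Adj u v := u ≠ v ∧ (par u = v ∨ par v = u)
  symm := by
    refine ⟨?_⟩
    rintro u v ⟨h1, h2⟩
    exact ⟨h1.symm, h2.symm⟩
  loopless := ⟨fun v h => h.1 rfl⟩

lemma parGraph_adj {par : W → W} {u v : W} :
    (parGraph par).Adj u v ↔ u ≠ v ∧ (par u = v ∨ par v = u) := Iff.rfl

variable {par : W → W} {c : W} {δ : W → ℕ}

lemma delta_iter_le (hc : par c = c) (hd : ∀ v, v ≠ c → δ (par v) < δ v) :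
    ∀ (n : ℕ) (v : W), δ (par^[n] v) ≤ δ v := by
  intro n
  induction n with
  | zero => simp
  | succ m ih =>
    intro v
    rw [Function.iterate_succ_apply]
    refine le_trans (ih (par v)) ?_
    by_cases hvc : v = c
    · subst hvc; rw [hc]
    · exact le_of_lt (hd v hvc)

lemma parGraph_reach_root (hc : par c = c) (hd : ∀ v, v ≠ c → δ (par v) < δ v) (v : W) :
    (parGraph par).Reachable v c := by
  have main : ∀ (n : ℕ) (v : W), δ v ≤ n → (parGraph par).Reachable v c := by
    intro n
    induction n with
    | zero =>
      intro v hv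
      by_cases hvc : v = c
      · subst hvc; exact Reachable.refl _
      · exact absurd (hd v hvc) (by omega)
    | succ m ih =>
      intro v hv
      by_cases hvc : v = c
      · subst hvc; exact Reachable.refl _
      · have hlt := hd v hvc
        have hne : v ≠ par v := fun h => by rw [← h] at hlt; omega
        have hadj : (parGraph par).Adj v (par v) := ⟨hne, Or.inl rfl⟩
        exact hadj.reachable.trans (ih (par v) (by omega))
  exact main (δ v) v le_rfl

lemma parGraph_connected (hc : par c = c) (hd : ∀ v, v ≠ c → δ (par v) < δ v) :
    (parGraph par).Connected := by
  have : Nonempty W := ⟨c⟩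
  rw [connected_iff]
  refine ⟨fun u v => ?_, this⟩
  exact (parGraph_reach_root hc hd u).trans (parGraph_reach_root hc hd v).symm

lemma parGraph_bridge (hc : par c = c) (hd : ∀ v, v ≠ c → δ (par v) < δ v)
    {u v : W} (hpar : par u = v) (huv : u ≠ v) :
    ¬ ((parGraph par) \ fromEdgeSet {s(u, v)}).Reachable u v := by
  intro hreach
  set Desc : Set W := {x | ∃ n, par^[n] x = u} with hD
  have step : ∀ x y, x ∈ Desc → ((parGraph par) \ fromEdgeSet {s(u, v)}).Adj x y → y ∈ Desc := by
    rintro x y ⟨n, hn⟩ hadj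
    rw [sdiff_adj] at hadj
    obtain ⟨⟨hxy, hor⟩, hne⟩ := hadj
    have hnediag : s(x, y) ≠ s(u, v) := by
      intro h
      exact hne (by rw [fromEdgeSet_adj]; exact ⟨by rw [h]; rfl, hxy⟩)
    rcases hor with h | h
    · cases n with
      | zero =>
        simp only [Function.iterate_zero, id] at hn
        subst hn
        rw [hpar] at h
        exact absurd (by rw [h]) hnediag
      | succ m =>
        rw [Function.iterate_succ_apply, h] at hn
        exact ⟨m, hn⟩
    · exact ⟨n + 1, by rw [Function.iterate_succ_apply, h, hn]⟩
  have hvDesc : v ∈ Desc := by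
    obtain ⟨p⟩ := hreach
    have : ∀ {x y : W} (q : ((parGraph par) \ fromEdgeSet {s(u, v)}).Walk x y),
        x ∈ Desc → y ∈ Desc := by
      intro x y q
      induction q with
      | nil => exact id
      | cons h q ih => exact fun hx => ih (step _ _ hx h)
    exact this p ⟨0, rfl⟩
  obtain ⟨n, hn⟩ := hvDesc
  have huc : u ≠ c := by
    rintro rfl
    rw [hc] at hpar
    exact huv hpar
  have h1 : δ u ≤ δ v := hn ▸ delta_iter_le hc hd n v
  have h2 : δ v < δ u := hpar ▸ hd u huc
  omega

lemma parGraph_isTree (hc : par c = c) (hd : ∀ v, v ≠ c → δ (par v) < δ v) :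
    (parGraph par).IsTree := by
  refine ⟨parGraph_connected hc hd, ?_⟩
  rw [isAcyclic_iff_forall_adj_isBridge]
  rintro x y ⟨hxy, hor⟩
  rw [isBridge_iff]
  show ¬ ((parGraph par) \ fromEdgeSet {s(x, y)}).Reachable x y
  rcases hor with h | h
  · exact parGraph_bridge hc hd h hxy
  · have := parGraph_bridge hc hd h (Ne.symm hxy)
    rw [Sym2.eq_swap (a := x)]
    intro hr
    exact this hr.symm





variable {V : Type}

/-- Inclusion homomorphism from an induced subgraph. -/
def inclHom (G : SimpleGraph V) (s : Set V) : G.induce s →g G :=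
  ⟨Subtype.val, fun {_ _} h => h⟩

@[simp] lemma inclHom_apply {G : SimpleGraph V} {s : Set V} (x : ↥s) :
    inclHom G s x = x.val := rfl

lemma reach_in_induce {G : SimpleGraph V} {s : Set V} :
    ∀ {x y : V} (p : G.Walk x y), (∀ z ∈ p.support, z ∈ s) →
      ∀ (hx : x ∈ s) (hy : y ∈ s), (G.induce s).Reachable ⟨x, hx⟩ ⟨y, hy⟩ := by
  intro x y p
  induction p with
  | nil =>
    intro _ hx hy
    exact Reachable.refl _
  | @cons u w v h p ih =>
    intro hsup hx hy
    have hw : w ∈ s := hsup w (by simp [Walk.support_cons])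
    have hadj : (G.induce s).Adj ⟨u, hx⟩ ⟨w, hw⟩ := h
    refine hadj.reachable.trans (ih ?_ hw hy)
    intro z hz
    exact hsup z (by simp [Walk.support_cons, hz])

lemma avoid_of_map {G : SimpleGraph V} {s : Set V} {x y : ↥s} {w : V} (hw : w ∉ s)
    (p : (G.induce s).Walk x y) : w ∉ (p.map (inclHom G s)).support := by
  rw [Walk.support_map]
  intro hmem
  obtain ⟨z, hz, hzw⟩ := List.mem_map.mp hmem
  rw [inclHom_apply] at hzw
  exact hw (hzw ▸ z.2)

lemma avoid_of_map' {G : SimpleGraph V} {s : Set V} {x y : ↥s} {w : V} (hws : w ∈ s)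
    (p : (G.induce s).Walk x y) (hw : (⟨w, hws⟩ : ↥s) ∉ p.support) :
    w ∉ (p.map (inclHom G s)).support := by
  rw [Walk.support_map]
  intro hmem
  obtain ⟨z, hz, hzw⟩ := List.mem_map.mp hmem
  rw [inclHom_apply] at hzw
  exact hw (by cases z; cases hzw; exact hz)

lemma support_of_map {G : SimpleGraph V} {s : Set V} {x y : ↥s}
    (p : (G.induce s).Walk x y) : ∀ z ∈ (p.map (inclHom G s)).support, z ∈ s := by
  intro z hz
  rw [Walk.support_map] at hz
  obtain ⟨z', _, hzw⟩ := List.mem_map.mp hz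
  exact hzw ▸ z'.2

section Struct

variable [Fintype V] {G : SimpleGraph V} {C : Set V}

/-- If a cycle vertex `c` is a cut vertex then all edges between the outside tree and the
cycle are incident to `c`. -/
lemma cross_edge_eq (hCconn : (G.induce C).Preconnected)
    (hC2 : ∀ w : ↥C, ((G.induce C).neighborSet w).ncard = 2)
    {c : V} (hc : c ∈ C) (hcut : IsCutVertex G c)
    {t d : V} (ht : t ∉ C) (hd : d ∈ C) (hadj : G.Adj t d)
    (hT : (G.induce Cᶜ).IsTree) : d = c := by
  classical
  haveI : Fintype ↥C := (Set.toFinite C).fintype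
  by_contra hdc
  apply hcut
  have hwalk : ∀ x, x ≠ c → ∃ p : G.Walk x d, c ∉ p.support := by
    intro x hxc
    by_cases hx : x ∈ C
    · have hxne : (⟨x, hx⟩ : ↥C) ≠ ⟨c, hc⟩ := fun h => hxc (congrArg Subtype.val h)
      have hdne : (⟨d, hd⟩ : ↥C) ≠ ⟨c, hc⟩ := fun h => hdc (congrArg Subtype.val h)
      obtain ⟨q, hq⟩ := del_connected hCconn hC2 ⟨c, hc⟩ hxne hdne
      exact ⟨q.map (inclHom G C), avoid_of_map' hc q hq⟩
    · obtain ⟨q⟩ := hT.isConnected.preconnected ⟨x, hx⟩ ⟨t, ht⟩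
      have hq := avoid_of_map (s := Cᶜ) (w := c) (by simpa using hc) q
      refine ⟨(q.map (inclHom G Cᶜ)).concat (by rw [inclHom_apply]; exact hadj), ?_⟩
      erw [Walk.support_concat]
      simp only [List.concat_eq_append, List.mem_append, List.mem_singleton, not_or]
      exact ⟨hq, Ne.symm hdc⟩
  rintro ⟨x, hx⟩ ⟨y, hy⟩
  rw [Set.mem_compl_singleton_iff] at hx hy
  obtain ⟨px, hpx⟩ := hwalk x hx
  obtain ⟨py, hpy⟩ := hwalk y hy
  have hsup : ∀ z ∈ (px.append py.reverse).support, z ∈ ({c} : Set V)ᶜ := by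
    intro z hz
    rw [Set.mem_compl_singleton_iff]
    rintro rfl
    exact mem_support_append hpx (mem_support_reverse hpy) hz
  exact reach_in_induce (px.append py.reverse) hsup _ _

lemma exists_cross_edge (hconn : G.Connected)
    (hCne : Nonempty ↥C) (hTne : Nonempty ↥(Cᶜ : Set V)) :
    ∃ t d, t ∉ C ∧ d ∈ C ∧ G.Adj t d := by
  obtain ⟨t0⟩ := hTne
  obtain ⟨d0⟩ := hCne
  obtain ⟨p⟩ := hconn.preconnected t0.val d0.val
  have main : ∀ {u v : V} (_ : G.Walk u v), u ∉ C → v ∈ C →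
      ∃ t d, t ∉ C ∧ d ∈ C ∧ G.Adj t d := by
    intro u v p
    induction p with
    | nil => intro hu hv; exact absurd hv hu
    | @cons u w v h p ih =>
      intro hu hv
      by_cases hw : w ∈ C
      · exact ⟨u, w, hu, hw, h⟩
      · exact ih hw hv
  exact main p t0.2 d0.2


lemma pathTree [Fintype V] {G : SimpleGraph V} {C : Set V}
    (hCconn : (G.induce C).Preconnected)
    (hC2 : ∀ w : ↥C, ((G.induce C).neighborSet w).ncard = 2)
    {c : V} (hc : c ∈ C) : (G.induce (C \ {c})).IsTree := by
  classical
  haveI : Fintype ↥C := (Set.toFinite C).fintype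
  obtain ⟨a, ha⟩ : ∃ a, a ∈ ((G.induce C).neighborSet ⟨c, hc⟩) := by
    have h2 := hC2 ⟨c, hc⟩
    rcases Set.ncard_eq_two.mp h2 with ⟨x, y, hxy, hset⟩
    exact ⟨x, by rw [hset]; exact Set.mem_insert _ _⟩
  have hane : a.val ≠ c := by
    intro h
    have : a = ⟨c, hc⟩ := Subtype.ext h
    exact (G.induce C).irrefl (this ▸ ha)
  constructor
  · rw [connected_iff]
    constructor
    · rintro ⟨x, hx, hxc⟩ ⟨y, hy, hyc⟩
      have hxc' : x ≠ c := by simpa using hxc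
      have hyc' : y ≠ c := by simpa using hyc
      have hxne : (⟨x, hx⟩ : ↥C) ≠ ⟨c, hc⟩ := fun h => hxc' (congrArg Subtype.val h)
      have hyne : (⟨y, hy⟩ : ↥C) ≠ ⟨c, hc⟩ := fun h => hyc' (congrArg Subtype.val h)
      obtain ⟨q, hq⟩ := del_connected hCconn hC2 ⟨c, hc⟩ hxne hyne
      have hsup : ∀ z ∈ (q.map (inclHom G C)).support, z ∈ C \ {c} := by
        intro z hz
        refine ⟨support_of_map q z hz, ?_⟩
        intro hzc
        exact avoid_of_map' hc q hq (by rwa [Set.mem_singleton_iff.mp hzc] at hz)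
      exact reach_in_induce (q.map (inclHom G C)) hsup _ _
    · exact ⟨⟨a.val, a.2, by simpa using hane⟩⟩
  · intro x q hq
    have hfinj : Function.Injective
        (⟨fun z => ⟨z.val, z.2.1⟩, fun {u v} h => h⟩ :
          G.induce (C \ {c}) →g G.induce C) := by
      rintro ⟨u, hu⟩ ⟨v, hv⟩ h
      have huv : u = v := congrArg Subtype.val h
      exact Subtype.ext huv
    have hq' := hq.map hfinj
    have hcm := cycle_support_all hCconn hC2 hq' ⟨c, hc⟩
    rw [Walk.support_map] at hcm
    obtain ⟨z, hz, hzc⟩ := List.mem_map.mp hcm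
    have hzc' : z.val = c := congrArg Subtype.val hzc
    exact z.2.2 (by simpa using hzc')

end Struct

end CTAux


/-- In a connected cycle-tree, at most one cut-vertex is a cycle-vertex; and if some
cycle-vertex is a cut-vertex then the graph is a partial 2-tree (treewidth at most 2). -/
theorem stmt19 {V : Type} [Fintype V] (G : SimpleGraph V) (ct : CycleTreeStruct G)
    (hconn : G.Connected) :
    ({c : V | c ∈ ct.cycleVerts ∧ IsCutVertex G c}).ncard ≤ 1 ∧
    ((∃ c ∈ ct.cycleVerts, IsCutVertex G c) → HasTreewidthAtMost G 2) := by
  classical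
  obtain ⟨hCconn, hC3, hC2⟩ := ct.cycle_cycle
  have hT := ct.tree_tree
  set C := ct.cycleVerts with hCdef
  haveI : Fintype ↥C := (Set.toFinite C).fintype
  have partb : ∀ c, c ∈ C → IsCutVertex G c → HasTreewidthAtMost G 2 := by
    intro c hc hcut
    have hkey : ∀ t d, t ∉ C → d ∈ C → G.Adj t d → d = c :=
      fun t d ht hd hadj =>
        CTAux.cross_edge_eq hCconn.preconnected hC2 hc hcut ht hd hadj hT
    have hP : (G.induce (C \ {c})).IsTree := CTAux.pathTree hCconn.preconnected hC2 hc
    obtain ⟨rP⟩ := hP.isConnected.nonempty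
    obtain ⟨rT⟩ := hT.isConnected.nonempty
    obtain ⟨pP, depP, hPr, hPstep, hPedge⟩ := CTAux.tree_parent hP rP
    obtain ⟨pT, depT, hTr, hTstep, hTedge⟩ := CTAux.tree_parent hT rT
    set par : V → V := fun v =>
      if hv : v ∈ C then
        (if hvc : v = c then c else
          (if (⟨v, ⟨hv, hvc⟩⟩ : ↥(C \ {c})) = rP then c else (pP ⟨v, ⟨hv, hvc⟩⟩).val))
      else (if (⟨v, hv⟩ : ↥(Cᶜ : Set V)) = rT then c else (pT ⟨v, hv⟩).val) with hpar
    set dl : V → ℕ := fun v =>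
      if hv : v ∈ C then (if hvc : v = c then 0 else depP ⟨v, ⟨hv, hvc⟩⟩ + 1)
      else depT ⟨v, hv⟩ + 1 with hdl
    have hpar_c : par c = c := by
      rw [hpar]; simp [hc]
    have hdl_c : dl c = 0 := by
      rw [hdl]; simp [hc]
    have hdl_P : ∀ (v : V) (hv : v ∈ C) (hvc : ¬ v = c),
        dl v = depP ⟨v, ⟨hv, hvc⟩⟩ + 1 := by
      intro v hv hvc
      rw [hdl]
      simp only []
      rw [dif_pos hv, dif_neg hvc]
    have hdl_T : ∀ (v : V) (hv : ¬ v ∈ C), dl v = depT ⟨v, hv⟩ + 1 := by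
      intro v hv
      rw [hdl]
      simp only []
      rw [dif_neg hv]
    have hpar_Proot : ∀ (v : V) (hv : v ∈ C) (hvc : ¬ v = c),
        (⟨v, ⟨hv, hvc⟩⟩ : ↥(C \ {c})) = rP → par v = c := by
      intro v hv hvc hroot
      rw [hpar]
      simp only []
      rw [dif_pos hv, dif_neg hvc, if_pos hroot]
    have hpar_P : ∀ (v : V) (hv : v ∈ C) (hvc : ¬ v = c),
        (⟨v, ⟨hv, hvc⟩⟩ : ↥(C \ {c})) ≠ rP → par v = (pP ⟨v, ⟨hv, hvc⟩⟩).val := by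
      intro v hv hvc hroot
      rw [hpar]
      simp only []
      rw [dif_pos hv, dif_neg hvc, if_neg hroot]
    have hpar_Troot : ∀ (v : V) (hv : ¬ v ∈ C),
        (⟨v, hv⟩ : ↥(Cᶜ : Set V)) = rT → par v = c := by
      intro v hv hroot
      rw [hpar]
      simp only []
      rw [dif_neg hv, if_pos hroot]
    have hpar_T : ∀ (v : V) (hv : ¬ v ∈ C),
        (⟨v, hv⟩ : ↥(Cᶜ : Set V)) ≠ rT → par v = (pT ⟨v, hv⟩).val := by
      intro v hv hroot
      rw [hpar]
      simp only []
      rw [dif_neg hv, if_neg hroot]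
    have hstep : ∀ v, v ≠ c → dl (par v) < dl v := by
      intro v hvc
      by_cases hv : v ∈ C
      · rw [hdl_P v hv hvc]
        by_cases hroot : (⟨v, ⟨hv, hvc⟩⟩ : ↥(C \ {c})) = rP
        · rw [hpar_Proot v hv hvc hroot, hdl_c]; omega
        · rw [hpar_P v hv hvc hroot]
          obtain ⟨hm1, hm2⟩ := (pP ⟨v, ⟨hv, hvc⟩⟩).2
          have hm2' : ¬ (pP ⟨v, ⟨hv, hvc⟩⟩).val = c := by simpa using hm2
          rw [hdl_P _ hm1 hm2']
          have heta : (⟨(pP ⟨v, ⟨hv, hvc⟩⟩).val, ⟨hm1, hm2'⟩⟩ : ↥(C \ {c}))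
              = pP ⟨v, ⟨hv, hvc⟩⟩ := Subtype.ext rfl
          rw [heta]
          have := (hPstep _ hroot).2
          omega
      · rw [hdl_T v hv]
        by_cases hroot : (⟨v, hv⟩ : ↥(Cᶜ : Set V)) = rT
        · rw [hpar_Troot v hv hroot, hdl_c]; omega
        · rw [hpar_T v hv hroot]
          have hm1 : (pT ⟨v, hv⟩).val ∈ (Cᶜ : Set V) := (pT ⟨v, hv⟩).2
          have hm1' : ¬ (pT ⟨v, hv⟩).val ∈ C := hm1
          rw [hdl_T _ hm1']
          have heta : (⟨(pT ⟨v, hv⟩).val, hm1'⟩ : ↥(Cᶜ : Set V)) = pT ⟨v, hv⟩ :=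
            Subtype.ext rfl
          rw [heta]
          have := (hTstep _ hroot).2
          omega
    have hedge : ∀ u v, G.Adj u v → u = c ∨ v = c ∨ par u = v ∨ par v = u := by
      intro u v hadj
      by_cases huc : u = c
      · exact Or.inl huc
      by_cases hvc : v = c
      · exact Or.inr (Or.inl hvc)
      have hne : u ≠ v := G.ne_of_adj hadj
      by_cases hu : u ∈ C <;> by_cases hv : v ∈ C
      · -- both in cycle
        have hadj' : (G.induce (C \ {c})).Adj ⟨u, ⟨hu, huc⟩⟩ ⟨v, ⟨hv, hvc⟩⟩ := hadj
        rcases hPedge _ _ hadj' with h | h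
        · by_cases hroot : (⟨u, ⟨hu, huc⟩⟩ : ↥(C \ {c})) = rP
          · exfalso
            apply hne
            have h2 : (⟨v, ⟨hv, hvc⟩⟩ : ↥(C \ {c})) = ⟨u, ⟨hu, huc⟩⟩ := by
              rw [← h, hroot, hPr]
            simpa using congrArg Subtype.val h2.symm
          · refine Or.inr (Or.inr (Or.inl ?_))
            rw [hpar_P u hu huc hroot, h]
        · by_cases hroot : (⟨v, ⟨hv, hvc⟩⟩ : ↥(C \ {c})) = rP
          · exfalso
            apply hne
            have h2 : (⟨u, ⟨hu, huc⟩⟩ : ↥(C \ {c})) = ⟨v, ⟨hv, hvc⟩⟩ := by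
              rw [← h, hroot, hPr]
            simpa using congrArg Subtype.val h2
          · refine Or.inr (Or.inr (Or.inr ?_))
            rw [hpar_P v hv hvc hroot, h]
      · exact absurd (hkey v u hv hu hadj.symm) huc
      · exact absurd (hkey u v hu hv hadj) hvc
      · -- both outside
        have hu' : u ∈ (Cᶜ : Set V) := hu
        have hv' : v ∈ (Cᶜ : Set V) := hv
        have hadj' : (G.induce (Cᶜ : Set V)).Adj ⟨u, hu'⟩ ⟨v, hv'⟩ := hadj
        rcases hTedge _ _ hadj' with h | h
        · by_cases hroot : (⟨u, hu'⟩ : ↥(Cᶜ : Set V)) = rT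
          · exfalso
            apply hne
            have h2 : (⟨v, hv'⟩ : ↥(Cᶜ : Set V)) = ⟨u, hu'⟩ := by
              rw [← h, hroot, hTr]
            simpa using congrArg Subtype.val h2.symm
          · refine Or.inr (Or.inr (Or.inl ?_))
            rw [hpar_T u hu hroot, h]
        · by_cases hroot : (⟨v, hv'⟩ : ↥(Cᶜ : Set V)) = rT
          · exfalso
            apply hne
            have h2 : (⟨u, hu'⟩ : ↥(Cᶜ : Set V)) = ⟨v, hv'⟩ := by
              rw [← h, hroot, hTr]
            simpa using congrArg Subtype.val h2
          · refine Or.inr (Or.inr (Or.inr ?_))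
            rw [hpar_T v hv hroot, h]
    refine ⟨⟨V, CTAux.parGraph par, CTAux.parGraph_isTree hpar_c hstep,
      fun i => {c, i, par i}, fun v => ⟨v, by simp⟩, ?_, ?_⟩, ?_⟩
    · -- covers_edge
      intro u v hadj
      rcases hedge u v hadj with h | h | h | h
      · exact ⟨v, by simp [h], by simp⟩
      · exact ⟨u, by simp, by simp [h]⟩
      · exact ⟨u, by simp, by simp [h]⟩
      · exact ⟨v, by simp [h], by simp⟩
    · -- bag_connected
      intro v
      by_cases hvc : v = c
      · have hmem : ∀ i : V, i ∈ {i : V | v ∈ ({c, i, par i} : Set V)} := by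
          intro i
          simp only [Set.mem_setOf_eq, Set.mem_insert_iff]
          exact Or.inl hvc
        rw [connected_iff]
        refine ⟨?_, ⟨⟨c, hmem c⟩⟩⟩
        rintro ⟨i, hi⟩ ⟨j, hj⟩
        obtain ⟨p⟩ := CTAux.parGraph_reach_root hpar_c hstep i
        obtain ⟨q⟩ := CTAux.parGraph_reach_root hpar_c hstep j
        exact CTAux.reach_in_induce (p.append q.reverse) (fun z _ => hmem z) hi hj
      · have hvS : v ∈ {i : V | v ∈ ({c, i, par i} : Set V)} := by
          simp
        have hub : ∀ (i : V) (hi : i ∈ {i : V | v ∈ ({c, i, par i} : Set V)}),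
            ((CTAux.parGraph par).induce {i : V | v ∈ ({c, i, par i} : Set V)}).Reachable
              ⟨i, hi⟩ ⟨v, hvS⟩ := by
          intro i hi
          have hi2 := hi
          simp only [Set.mem_setOf_eq, Set.mem_insert_iff, Set.mem_singleton_iff] at hi2
          rcases hi2 with h | h | h
          · exact absurd h hvc
          · cases h
            exact Reachable.refl _
          · have hne2 : i ≠ v := by
              rintro rfl
              have hlt := hstep i hvc
              rw [← h] at hlt
              exact lt_irrefl _ hlt
            have hadj : (CTAux.parGraph par).Adj i v := ⟨hne2, Or.inl h.symm⟩
            refine CTAux.reach_in_induce (Walk.cons hadj Walk.nil) ?_ hi hvS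
            intro z hz
            rw [Walk.support_cons] at hz
            rcases List.mem_cons.mp hz with rfl | hz2
            · exact hi
            · have : z = v := by simpa using hz2
              exact this ▸ hvS
        rw [connected_iff]
        refine ⟨?_, ⟨⟨v, hvS⟩⟩⟩
        rintro ⟨i, hi⟩ ⟨j, hj⟩
        exact (hub i hi).trans (hub j hj).symm
    · -- bag sizes
      intro i
      refine ⟨Set.toFinite _, ?_⟩
      show (({c, i, par i} : Set V)).ncard ≤ 3
      have h1 := Set.ncard_insert_le c ({i, par i} : Set V)
      have h2 := Set.ncard_insert_le i ({par i} : Set V)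
      rw [Set.ncard_singleton] at h2
      omega
  constructor
  · rw [Set.ncard_le_one (Set.toFinite _)]
    rintro c1 ⟨hc1, hcut1⟩ c2 ⟨hc2, hcut2⟩
    obtain ⟨t, d, ht, hd, hadj⟩ :=
      CTAux.exists_cross_edge hconn hCconn.nonempty hT.isConnected.nonempty
    have e1 := CTAux.cross_edge_eq hCconn.preconnected hC2 hc1 hcut1 ht hd hadj hT
    have e2 := CTAux.cross_edge_eq hCconn.preconnected hC2 hc2 hcut2 ht hd hadj hT
    rw [← e1, ← e2]
  · rintro ⟨c, hc, hcut⟩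
    exact partb c hc hcut
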